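/- Freezing time of the stuck zero-range process: For every δ ∈ (0,1) and every ε < 1 there exists ℓ̄ = ℓ̄(ε,δ) such that for all ℓ ≥ ℓ̄ and every initial configuration χ₀ ∈ A_ℓ(δ), the probability, under the law δ_{χ₀} e^{ℓ⁴ 𝓛^{SZR}_ℓ} of the stuck zero-range process at time ℓ⁴, of the set of configurations χ such that χ(y) ≥ 2 for some y ∈ Λ_ℓ (i.e. the process is not yet frozen) is at most exp(−ℓ^ε). -/

import Mathlib

set_option synthInstance.maxHeartbeats 1000000
set_option maxHeartbeats 1000000

open scoped BigOperators
open scoped Classical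
open Fin.NatCast

namespace FEP

/-- Move one particle from site `x` to site `y`. -/
def move {I : Type*} [DecidableEq I] (ω : I → ℕ) (x y : I) : I → ℕ :=
  fun u => if u = x then ω x - 1 else if u = y then ω y + 1 else ω u

/-- The sector of zero-range configurations on `𝕋_K` with exactly `n` particles. -/
def ZRSector (K n : ℕ) [NeZero K] := {ω : ZMod K → ℕ // ∑ x : ZMod K, ω x = n}

lemma ZRSector.le {K n : ℕ} [NeZero K] (ω : ZRSector K n) (x : ZMod K) : ω.1 x ≤ n := by
  have h : ω.1 x ≤ ∑ y : ZMod K, ω.1 y :=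
    Finset.single_le_sum (f := ω.1) (fun i _ => Nat.zero_le _) (Finset.mem_univ x)
  simpa [ω.2] using h

noncomputable instance (K n : ℕ) [NeZero K] : Fintype (ZRSector K n) :=
  Fintype.ofInjective
    (fun ω : ZRSector K n => fun x : ZMod K =>
      (⟨ω.1 x, Nat.lt_succ_of_le (ZRSector.le ω x)⟩ : Fin (n + 1)))
    (fun a b h => Subtype.ext (funext fun x => congrArg Fin.val (congrFun h x)))

/-- The generator `𝓛^{ZR}_K` of the zero-range process, as a matrix on the sector with
`n` particles. -/
noncomputable def genZR (K n : ℕ) [NeZero K] :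
    Matrix (ZRSector K n) (ZRSector K n) ℝ :=
  fun ω ω' => ∑ x : ZMod K,
    (if 2 ≤ ω.1 x then (1 : ℝ) else 0) *
      (((if ω'.1 = move ω.1 x (x + 1) then (1 : ℝ) else 0) - (if ω' = ω then 1 else 0)) +
        ((if ω'.1 = move ω.1 x (x - 1) then (1 : ℝ) else 0) - (if ω' = ω then 1 else 0)))

/-- The zero-range generator as a continuous linear endomorphism. -/
noncomputable def genZRE (K n : ℕ) [NeZero K] :
    (ZRSector K n → ℝ) →L[ℝ] (ZRSector K n → ℝ) :=
  LinearMap.toContinuousLinearMap (Matrix.toLin' (genZR K n))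

/-- The probability, under the law `δ_{ω₀} e^{t 𝓛^{ZR}_K}` of the zero-range process at time `t`
started from `ω₀`, of the set `S`. -/
noncomputable def zrProb (K n : ℕ) [NeZero K] (ω₀ : ZRSector K n) (t : ℝ)
    (S : Set (ZRSector K n)) : ℝ :=
  (NormedSpace.exp (t • genZRE K n)) (fun ω => if ω ∈ S then (1 : ℝ) else 0) ω₀

/-- The local configuration on `Λ̄_ℓ` obtained from `ω` by restricting to `{x+1,…,x+ℓ}`,
keeping only the `⌊(1+δ)ℓ⌋` leftmost particles, with empty boundary sites. -/
noncomputable def truncConf {K : ℕ} (ℓ : ℕ) (δ : ℝ) (ω : ZMod K → ℕ) (x : ZMod K) :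
    ℕ → ℕ :=
  fun y => if 1 ≤ y ∧ y ≤ ℓ then
      min (ω (x + (y : ZMod K)))
        (⌊(1 + δ) * ℓ⌋₊ - ∑ z ∈ Finset.Ico 1 y, ω (x + (z : ZMod K)))
    else 0

/-- The set `A_ℓ(δ)` of configurations on `Λ̄_ℓ = {0,…,ℓ+1}`. -/
def memA (ℓ : ℕ) (δ : ℝ) (v : ℕ → ℕ) : Prop :=
  v 0 = 0 ∧ v (ℓ + 1) = 0 ∧ (∑ y ∈ Finset.Icc 1 ℓ, v y) = ⌊(1 + δ) * ℓ⌋₊ ∧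
    ((∑ y ∈ Finset.Icc 1 ℓ, y * v y : ℕ) : ℝ) ≤ (1 + δ / 2) * (1 + δ) * (ℓ * (ℓ + 1)) / 2

/-- The set `B_{K,ℓ}(δ)` of `δ`-regular zero-range configurations on `𝕋_K`. -/
def memB (K ℓ : ℕ) (δ : ℝ) (ω : ZMod K → ℕ) : Prop :=
  ∀ x : ZMod K, memA ℓ δ (truncConf ℓ δ ω x)

end FEP

namespace FEP

/-- The sector of configurations of the stuck zero-range process on `Λ̄_ℓ = {0,…,ℓ+1}`
with exactly `n` particles. -/
def SZRSector (ℓ n : ℕ) := {χ : Fin (ℓ + 2) → ℕ // ∑ y : Fin (ℓ + 2), χ y = n}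

lemma SZRSector.le {ℓ n : ℕ} (χ : SZRSector ℓ n) (y : Fin (ℓ + 2)) : χ.1 y ≤ n := by
  have h : χ.1 y ≤ ∑ z : Fin (ℓ + 2), χ.1 z :=
    Finset.single_le_sum (f := χ.1) (fun i _ => Nat.zero_le _) (Finset.mem_univ y)
  simpa [χ.2] using h

noncomputable instance (ℓ n : ℕ) : Fintype (SZRSector ℓ n) :=
  Fintype.ofInjective
    (fun χ : SZRSector ℓ n => fun y : Fin (ℓ + 2) =>
      (⟨χ.1 y, Nat.lt_succ_of_le (SZRSector.le χ y)⟩ : Fin (n + 1)))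
    (fun χ χ' h => Subtype.ext (funext fun y => congrArg Fin.val (congrFun h y)))

/-- The generator `𝓛^{SZR}_ℓ` of the stuck zero-range process on `Λ̄_ℓ`, as a matrix on the
sector with `n` particles: particles jump at rate one between neighbouring sites of
`Λ_ℓ = {1,…,ℓ}` when at least two particles are present, and particles reaching the boundary
sites `0` and `ℓ+1` never move again. -/
noncomputable def genSZR (ℓ n : ℕ) : Matrix (SZRSector ℓ n) (SZRSector ℓ n) ℝ :=
  fun χ χ' =>
    (if 2 ≤ χ.1 ((ℓ : ℕ) : Fin (ℓ + 2)) then (1 : ℝ) else 0) *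
        ((if χ'.1 = move χ.1 ((ℓ : ℕ) : Fin (ℓ + 2)) ((ℓ + 1 : ℕ) : Fin (ℓ + 2))
            then (1 : ℝ) else 0) - (if χ' = χ then 1 else 0))
      + (if 2 ≤ χ.1 ((1 : ℕ) : Fin (ℓ + 2)) then (1 : ℝ) else 0) *
        ((if χ'.1 = move χ.1 ((1 : ℕ) : Fin (ℓ + 2)) ((0 : ℕ) : Fin (ℓ + 2))
            then (1 : ℝ) else 0) - (if χ' = χ then 1 else 0))
      + ∑ y ∈ Finset.Icc 1 ℓ, ∑ z ∈ Finset.Icc 1 ℓ,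
          (if z = y + 1 ∨ y = z + 1 then
            (if 2 ≤ χ.1 ((y : ℕ) : Fin (ℓ + 2)) then (1 : ℝ) else 0) *
              ((if χ'.1 = move χ.1 ((y : ℕ) : Fin (ℓ + 2)) ((z : ℕ) : Fin (ℓ + 2))
                  then (1 : ℝ) else 0) - (if χ' = χ then 1 else 0))
          else 0)

/-- The stuck zero-range generator as a continuous linear endomorphism. -/
noncomputable def genSZRE (ℓ n : ℕ) :
    (SZRSector ℓ n → ℝ) →L[ℝ] (SZRSector ℓ n → ℝ) :=
  LinearMap.toContinuousLinearMap (Matrix.toLin' (genSZR ℓ n))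

/-- The probability, under the law `δ_{χ₀} e^{t 𝓛^{SZR}_ℓ}` of the stuck zero-range process at
time `t` started from `χ₀`, of the set `S`. -/
noncomputable def szrProb (ℓ n : ℕ) (χ₀ : SZRSector ℓ n) (t : ℝ)
    (S : Set (SZRSector ℓ n)) : ℝ :=
  (NormedSpace.exp (t • genSZRE ℓ n)) (fun χ => if χ ∈ S then (1 : ℝ) else 0) χ₀


section Abstract

variable {E : Type*} [Fintype E]




/-- Abstract Lyapunov comparison for matrix semigroups. -/
theorem exp_comparison (A : (E → ℝ) →L[ℝ] (E → ℝ)) (R lam t : ℝ)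
    (hR : 0 ≤ lam) (hlamR : lam ≤ R) (ht : 0 ≤ t)
    (hpos : ∀ f : E → ℝ, (∀ χ, 0 ≤ f χ) → ∀ χ, 0 ≤ A f χ + R * f χ)
    (h f : E → ℝ) (hh : ∀ χ, 0 ≤ h χ) (hf0 : ∀ χ, 0 ≤ f χ) (hfh : ∀ χ, f χ ≤ h χ)
    (hLyap : ∀ χ, A h χ ≤ -lam * h χ) (χ₀ : E) :
    (NormedSpace.exp (t • A)) f χ₀ ≤ Real.exp (-lam * t) * h χ₀ := by
  set M : (E → ℝ) →L[ℝ] (E → ℝ) := A + R • (1 : (E → ℝ) →L[ℝ] (E → ℝ)) with hM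
  -- B preserves the nonnegative cone
  have hMpos : ∀ g : E → ℝ, (∀ χ, 0 ≤ g χ) → ∀ χ, 0 ≤ M g χ := by
    intro g hg χ
    have := hpos g hg χ
    simpa [hM, ContinuousLinearMap.add_apply, mul_comm] using this
  have hMmono : ∀ g₁ g₂ : E → ℝ, (∀ χ, g₁ χ ≤ g₂ χ) → ∀ χ, M g₁ χ ≤ M g₂ χ := by
    intro g₁ g₂ hg χ
    have h0 : ∀ χ, 0 ≤ (g₂ - g₁) χ := fun χ => by simpa using sub_nonneg.2 (hg χ)
    have := hMpos _ h0 χ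
    simp only [map_sub] at this
    have : 0 ≤ M g₂ χ - M g₁ χ := by simpa using this
    linarith
  have hMh : ∀ χ, M h χ ≤ (R - lam) * h χ := by
    intro χ
    have h1 := hLyap χ
    have h2 : M h χ = A h χ + R * h χ := by
      simp [hM, ContinuousLinearMap.add_apply, ContinuousLinearMap.smul_apply,
        ContinuousLinearMap.one_apply]
    rw [h2]
    nlinarith [hh χ]
  -- iterate: 0 ≤ M^k f ≤ (R-lam)^k h
  have hiter : ∀ k : ℕ, (∀ χ, 0 ≤ (M ^ k) f χ) ∧ (∀ χ, (M ^ k) f χ ≤ (R - lam) ^ k * h χ) := by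
    intro k
    induction k with
    | zero => exact ⟨hf0, by simpa using hfh⟩
    | succ k ih =>
      obtain ⟨ih0, ih1⟩ := ih
      have hpk : (0:ℝ) ≤ (R - lam) ^ k := pow_nonneg (by linarith) k
      constructor
      · intro χ
        have : (M ^ (k+1)) f = M ((M ^ k) f) := by rw [pow_succ' M k]; rfl
        rw [this]; exact hMpos _ ih0 χ
      · intro χ
        have he : (M ^ (k+1)) f = M ((M ^ k) f) := by rw [pow_succ' M k]; rfl
        rw [he]
        have h1 : M ((M ^ k) f) χ ≤ M ((R - lam) ^ k • h) χ := by
          refine hMmono _ _ (fun χ' => ?_) χ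
          simpa using ih1 χ'
        have h2 : M ((R - lam) ^ k • h) χ = (R - lam) ^ k * M h χ := by
          rw [map_smul]; simp
        calc M ((M ^ k) f) χ ≤ (R - lam) ^ k * M h χ := by rw [← h2]; exact h1
          _ ≤ (R - lam) ^ k * ((R - lam) * h χ) := by
              exact mul_le_mul_of_nonneg_left (hMh χ) hpk
          _ = (R - lam) ^ (k+1) * h χ := by ring
  -- evaluation functional
  let ev : ((E → ℝ) →L[ℝ] (E → ℝ)) →L[ℝ] ℝ :=
    (ContinuousLinearMap.proj χ₀).comp (ContinuousLinearMap.apply ℝ (E → ℝ) f)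
  have hev : ∀ T : (E → ℝ) →L[ℝ] (E → ℝ), ev T = T f χ₀ := fun T => rfl
  -- decompose the exponential
  have hsplit : t • A = (-(t * R)) • (1 : (E → ℝ) →L[ℝ] (E → ℝ)) + t • M := by
    ext g χ
    simp only [hM, ContinuousLinearMap.smul_apply, ContinuousLinearMap.add_apply,
      ContinuousLinearMap.one_apply, Pi.smul_apply, Pi.add_apply, smul_eq_mul]
    ring
  have hcomm : Commute ((-(t * R)) • (1 : (E → ℝ) →L[ℝ] (E → ℝ))) (t • M) := by
    show _ * _ = _ * _
    rw [smul_mul_assoc, one_mul, mul_smul_comm, mul_one]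
  have hexp1 : NormedSpace.exp ((-(t * R)) • (1 : (E → ℝ) →L[ℝ] (E → ℝ)))
      = Real.exp (-(t * R)) • (1 : (E → ℝ) →L[ℝ] (E → ℝ)) := by
    rw [← Algebra.algebraMap_eq_smul_one, ← NormedSpace.algebraMap_exp_comm,
      ← Real.exp_eq_exp_ℝ, Algebra.algebraMap_eq_smul_one]
  have hmain : (NormedSpace.exp (t • A)) f χ₀
      = Real.exp (-(t * R)) * ((NormedSpace.exp (t • M)) f χ₀) := by
    rw [hsplit, NormedSpace.exp_add_of_commute_of_mem_ball (𝕂 := ℝ) hcomm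
      ((NormedSpace.expSeries_radius_eq_top ℝ ((E → ℝ) →L[ℝ] (E → ℝ))).symm ▸ edist_lt_top _ _)
      ((NormedSpace.expSeries_radius_eq_top ℝ ((E → ℝ) →L[ℝ] (E → ℝ))).symm ▸ edist_lt_top _ _), hexp1]
    simp [ContinuousLinearMap.smul_apply, smul_smul]
  -- series expansion of exp (t • M) evaluated
  have hsum0 : Summable fun k : ℕ => ((k.factorial : ℝ)⁻¹) • (t • M) ^ k :=
    NormedSpace.expSeries_summable' (𝕂 := ℝ) (t • M)
  have hsum1 : Summable fun k : ℕ => ev (((k.factorial : ℝ)⁻¹) • (t • M) ^ k) :=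
    hsum0.map (ev : ((E → ℝ) →L[ℝ] (E → ℝ)) →ₗ[ℝ] ℝ).toAddMonoidHom ev.continuous
  have hser : (NormedSpace.exp (t • M)) f χ₀
      = ∑' k : ℕ, ((k.factorial : ℝ)⁻¹) * (t ^ k * ((M ^ k) f χ₀)) := by
    have h1 : ev (NormedSpace.exp (t • M)) = ∑' k : ℕ,
        ev (((k.factorial : ℝ)⁻¹) • (t • M) ^ k) := by
      rw [NormedSpace.exp_eq_tsum ℝ]
      exact ev.map_tsum hsum0
    rw [← hev, h1]
    congr 1
    funext k
    rw [hev, smul_pow]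
    simp [ContinuousLinearMap.smul_apply, smul_smul, mul_assoc]
  have hterm : ∀ k : ℕ, ((k.factorial : ℝ)⁻¹) * (t ^ k * ((M ^ k) f χ₀))
      ≤ ((k.factorial : ℝ)⁻¹) * ((t * (R - lam)) ^ k * h χ₀) := by
    intro k
    have h1 := (hiter k).2 χ₀
    have htk : (0:ℝ) ≤ t ^ k := pow_nonneg ht k
    have hfk : (0:ℝ) ≤ ((k.factorial : ℝ)⁻¹) := by positivity
    have : t ^ k * ((M ^ k) f χ₀) ≤ t ^ k * ((R - lam) ^ k * h χ₀) :=
      mul_le_mul_of_nonneg_left h1 htk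
    have h2 : t ^ k * ((R - lam) ^ k * h χ₀) = (t * (R - lam)) ^ k * h χ₀ := by
      rw [mul_pow]; ring
    rw [← h2]
    exact mul_le_mul_of_nonneg_left this hfk
  have hsumR : Summable fun k : ℕ => ((k.factorial : ℝ)⁻¹) * ((t * (R - lam)) ^ k * h χ₀) := by
    have := (Real.summable_pow_div_factorial (t * (R - lam))).mul_right (h χ₀)
    refine this.congr fun k => ?_
    field_simp
  have hsumL : Summable fun k : ℕ => ((k.factorial : ℝ)⁻¹) * (t ^ k * ((M ^ k) f χ₀)) := by
    refine hsum1.congr fun k => ?_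
    rw [hev, smul_pow]
    simp [ContinuousLinearMap.smul_apply, smul_smul, mul_assoc]
  have hbound : (NormedSpace.exp (t • M)) f χ₀ ≤ Real.exp (t * (R - lam)) * h χ₀ := by
    rw [hser]
    have h2 : Real.exp (t * (R - lam)) * h χ₀
        = ∑' k : ℕ, ((k.factorial : ℝ)⁻¹) * ((t * (R - lam)) ^ k * h χ₀) := by
      rw [Real.exp_eq_exp_ℝ, NormedSpace.exp_eq_tsum ℝ]
      rw [← tsum_mul_right]
      congr 1
      funext k
      simp [smul_eq_mul]; ring
    rw [h2]
    exact Summable.tsum_le_tsum hterm hsumL hsumR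
  rw [hmain]
  calc Real.exp (-(t * R)) * ((NormedSpace.exp (t • M)) f χ₀)
      ≤ Real.exp (-(t * R)) * (Real.exp (t * (R - lam)) * h χ₀) :=
        mul_le_mul_of_nonneg_left hbound (Real.exp_nonneg _)
    _ = Real.exp (-lam * t) * h χ₀ := by
        rw [← mul_assoc, ← Real.exp_add]; ring_nf


end Abstract

section Concrete

variable {ℓ n : ℕ}

lemma move_sum {χ : Fin (ℓ+2) → ℕ} {x z : Fin (ℓ+2)} (hx : 1 ≤ χ x) (hxz : x ≠ z) :
    ∑ u, move χ x z u = ∑ u, χ u := by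
  have hmv : move χ x z = Function.update (Function.update χ z (χ z + 1)) x (χ x - 1) := by
    funext u
    rcases eq_or_ne u x with rfl|hux
    · simp [move, Function.update, hxz]
    · rcases eq_or_ne u z with rfl|huz
      · simp [move, Function.update, hux, Ne.symm hux]
      · simp [move, Function.update, hux, huz]
  rw [hmv, Finset.sum_update_of_mem (Finset.mem_univ x),
    Finset.sum_update_of_mem (by simp [Finset.mem_sdiff, Ne.symm hxz] :
      z ∈ Finset.univ \ {x})]
  have h1 : ∑ u, χ u = χ x + ∑ u ∈ Finset.univ \ {x}, χ u := by
    rw [Finset.sum_eq_add_sum_sdiff_singleton_of_mem (Finset.mem_univ x)]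
  have h2 : ∑ u ∈ Finset.univ \ {x}, χ u
      = χ z + ∑ u ∈ (Finset.univ \ {x}) \ {z}, χ u := by
    rw [Finset.sum_eq_add_sum_sdiff_singleton_of_mem
      (by simp [Finset.mem_sdiff, Ne.symm hxz] : z ∈ Finset.univ \ {x})]
  rw [h1, h2]
  omega

lemma sector_sum_delta (f : SZRSector ℓ n → ℝ) (χ : SZRSector ℓ n) :
    ∑ χ' : SZRSector ℓ n, (if χ' = χ then (1:ℝ) else 0) * f χ' = f χ := by
  rw [Finset.sum_eq_single χ]
  · simp
  · intro b _ hb; simp [hb]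
  · intro hb; exact absurd (Finset.mem_univ χ) hb

lemma sector_sum_move (f : SZRSector ℓ n → ℝ) {m : Fin (ℓ+2) → ℕ}
    (hm : ∑ u, m u = n) :
    ∑ χ' : SZRSector ℓ n, (if χ'.1 = m then (1:ℝ) else 0) * f χ' = f ⟨m, hm⟩ := by
  have key : ∀ χ' : SZRSector ℓ n,
      (if χ'.1 = m then (1:ℝ) else 0) * f χ' = (if χ' = ⟨m, hm⟩ then (1:ℝ) else 0) * f χ' := by
    intro χ'
    congr 1
    by_cases h : χ'.1 = m
    · rw [if_pos h]; exact (if_pos (Subtype.ext h)).symm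
    · rw [if_neg h]; exact (if_neg (fun hc => h (congrArg Subtype.val hc))).symm
  rw [Finset.sum_congr rfl (fun χ' _ => key χ')]
  exact sector_sum_delta f _

/-- The result of one jump, as an element of the sector. -/
noncomputable def jumpTo (χ : SZRSector ℓ n) (x z : Fin (ℓ+2)) : SZRSector ℓ n :=
  if h : 1 ≤ χ.1 x ∧ x ≠ z then ⟨move χ.1 x z, (move_sum h.1 h.2).trans χ.2⟩ else χ

lemma term_eval (f : SZRSector ℓ n → ℝ) (χ : SZRSector ℓ n) (x z : Fin (ℓ+2)) (hxz : x ≠ z) :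
    ∑ χ' : SZRSector ℓ n, (if 2 ≤ χ.1 x then (1:ℝ) else 0) *
      ((if χ'.1 = move χ.1 x z then (1:ℝ) else 0) - (if χ' = χ then 1 else 0)) * f χ'
    = (if 2 ≤ χ.1 x then (1:ℝ) else 0) * (f (jumpTo χ x z) - f χ) := by
  by_cases h : 2 ≤ χ.1 x
  · have h1 : 1 ≤ χ.1 x := le_trans one_le_two h
    have hm : ∑ u, move χ.1 x z u = n := (move_sum h1 hxz).trans χ.2
    have hj : jumpTo χ x z = ⟨move χ.1 x z, hm⟩ := by rw [jumpTo]; exact dif_pos ⟨h1, hxz⟩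
    simp only [h, if_true, one_mul, sub_mul]
    rw [Finset.sum_sub_distrib, sector_sum_move f hm, sector_sum_delta f χ, hj]
  · simp [h]

lemma gen_expand (f : SZRSector ℓ n → ℝ) (χ : SZRSector ℓ n) :
    genSZRE ℓ n f χ = ∑ χ' : SZRSector ℓ n, genSZR ℓ n χ χ' * f χ' := by
  simp [genSZRE, Matrix.toLin'_apply, Matrix.mulVec, dotProduct]

lemma icc_cast_ne {y z : ℕ} (hy : y ∈ Finset.Icc 1 ℓ) (hz : z ∈ Finset.Icc 1 ℓ)
    (hadj : z = y + 1 ∨ y = z + 1) :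
    ((y : ℕ) : Fin (ℓ+2)) ≠ ((z : ℕ) : Fin (ℓ+2)) := by
  simp only [Finset.mem_Icc] at hy hz
  intro hc
  have h1 : (((y : ℕ) : Fin (ℓ+2)) : ℕ) = y := Fin.val_cast_of_lt (by omega)
  have h2 : (((z : ℕ) : Fin (ℓ+2)) : ℕ) = z := Fin.val_cast_of_lt (by omega)
  have : y = z := by rw [← h1, ← h2, hc]
  omega

lemma gen_apply (f : SZRSector ℓ n → ℝ) (χ : SZRSector ℓ n) :
    genSZRE ℓ n f χ =
      (if 2 ≤ χ.1 ((ℓ : ℕ) : Fin (ℓ+2)) then (1:ℝ) else 0) *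
          (f (jumpTo χ ((ℓ : ℕ) : Fin (ℓ+2)) ((ℓ + 1 : ℕ) : Fin (ℓ+2))) - f χ)
    + (if 2 ≤ χ.1 ((1 : ℕ) : Fin (ℓ+2)) then (1:ℝ) else 0) *
          (f (jumpTo χ ((1 : ℕ) : Fin (ℓ+2)) ((0 : ℕ) : Fin (ℓ+2))) - f χ)
    + ∑ y ∈ Finset.Icc 1 ℓ, ∑ z ∈ Finset.Icc 1 ℓ,
        (if z = y + 1 ∨ y = z + 1 then
          (if 2 ≤ χ.1 ((y : ℕ) : Fin (ℓ+2)) then (1:ℝ) else 0) *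
            (f (jumpTo χ ((y : ℕ) : Fin (ℓ+2)) ((z : ℕ) : Fin (ℓ+2))) - f χ)
        else 0) := by
  have hne1 : ((ℓ : ℕ) : Fin (ℓ+2)) ≠ ((ℓ + 1 : ℕ) : Fin (ℓ+2)) := by
    intro hc
    have h1 : (((ℓ : ℕ) : Fin (ℓ+2)) : ℕ) = ℓ := Fin.val_cast_of_lt (by omega)
    have h2 : (((ℓ + 1 : ℕ) : Fin (ℓ+2)) : ℕ) = ℓ + 1 := Fin.val_cast_of_lt (by omega)
    have := congrArg Fin.val hc
    rw [h1, h2] at this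
    omega
  have hne2 : ((1 : ℕ) : Fin (ℓ+2)) ≠ ((0 : ℕ) : Fin (ℓ+2)) := by
    intro hc
    have h1 : (((1 : ℕ) : Fin (ℓ+2)) : ℕ) = 1 := Fin.val_cast_of_lt (by omega)
    have h2 : (((0 : ℕ) : Fin (ℓ+2)) : ℕ) = 0 := Fin.val_cast_of_lt (by omega)
    have := congrArg Fin.val hc
    rw [h1, h2] at this
    omega
  rw [gen_expand]
  unfold genSZR
  simp only [add_mul]
  rw [Finset.sum_add_distrib, Finset.sum_add_distrib]
  congr 1
  · congr 1
    · exact term_eval f χ _ _ hne1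
    · exact term_eval f χ _ _ hne2
  · -- the double-sum part
    have step1 : ∀ χ' : SZRSector ℓ n,
        (∑ y ∈ Finset.Icc 1 ℓ, ∑ z ∈ Finset.Icc 1 ℓ,
          (if z = y + 1 ∨ y = z + 1 then
            (if 2 ≤ χ.1 ((y : ℕ) : Fin (ℓ+2)) then (1:ℝ) else 0) *
              ((if χ'.1 = move χ.1 ((y : ℕ) : Fin (ℓ+2)) ((z : ℕ) : Fin (ℓ+2)) then (1:ℝ) else 0)
                - (if χ' = χ then 1 else 0))
          else 0)) * f χ'
        = ∑ y ∈ Finset.Icc 1 ℓ, ∑ z ∈ Finset.Icc 1 ℓ,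
          ((if z = y + 1 ∨ y = z + 1 then
            (if 2 ≤ χ.1 ((y : ℕ) : Fin (ℓ+2)) then (1:ℝ) else 0) *
              ((if χ'.1 = move χ.1 ((y : ℕ) : Fin (ℓ+2)) ((z : ℕ) : Fin (ℓ+2)) then (1:ℝ) else 0)
                - (if χ' = χ then 1 else 0))
          else 0)) * f χ' := by
      intro χ'
      rw [Finset.sum_mul]
      exact Finset.sum_congr rfl fun y _ => by rw [Finset.sum_mul]
    rw [Finset.sum_congr rfl fun χ' _ => step1 χ']
    rw [Finset.sum_comm]
    refine Finset.sum_congr rfl fun y hy => ?_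
    rw [Finset.sum_comm]
    refine Finset.sum_congr rfl fun z hz => ?_
    by_cases hadj : z = y + 1 ∨ y = z + 1
    · simp only [if_pos hadj]
      exact term_eval f χ _ _ (icc_cast_ne hy hz hadj)
    · simp [hadj]


/-- Concave weight function vanishing at the boundary sites. -/
noncomputable def wt (ℓ : ℕ) (u : ℕ) : ℝ := (u : ℝ) * ((ℓ : ℝ) + 1 - (u : ℝ))

/-- Linear potential. -/
noncomputable def pot (χ : SZRSector ℓ n) : ℝ := ∑ u : Fin (ℓ+2), wt ℓ u.val * (χ.1 u : ℝ)

lemma wt_nonneg {u : ℕ} (hu : u ≤ ℓ + 1) : 0 ≤ wt ℓ u := by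
  unfold wt
  have h1 : (0:ℝ) ≤ (u:ℝ) := Nat.cast_nonneg u
  have h2 : (u:ℝ) ≤ (ℓ:ℝ) + 1 := by exact_mod_cast Nat.cast_le.mpr hu
  nlinarith

lemma wt_le {u : ℕ} (hu : u ≤ ℓ + 1) : wt ℓ u ≤ ((ℓ:ℝ) + 1) ^ 2 := by
  unfold wt
  have h1 : (0:ℝ) ≤ (u:ℝ) := Nat.cast_nonneg u
  have h2 : (u:ℝ) ≤ (ℓ:ℝ) + 1 := by exact_mod_cast Nat.cast_le.mpr hu
  nlinarith

lemma pot_nonneg (χ : SZRSector ℓ n) : 0 ≤ pot χ := by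
  refine Finset.sum_nonneg fun u _ => ?_
  have hu : (u : ℕ) ≤ ℓ + 1 := by omega
  exact mul_nonneg (wt_nonneg hu) (Nat.cast_nonneg _)

lemma pot_le (χ : SZRSector ℓ n) : pot χ ≤ ((ℓ:ℝ) + 1) ^ 2 * n := by
  have h1 : pot χ ≤ ∑ u : Fin (ℓ+2), ((ℓ:ℝ) + 1) ^ 2 * (χ.1 u : ℝ) := by
    refine Finset.sum_le_sum fun u _ => ?_
    have hu : (u : ℕ) ≤ ℓ + 1 := by omega
    exact mul_le_mul_of_nonneg_right (wt_le hu) (Nat.cast_nonneg _)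
  have h2 : ∑ u : Fin (ℓ+2), ((ℓ:ℝ) + 1) ^ 2 * (χ.1 u : ℝ) = ((ℓ:ℝ) + 1) ^ 2 * n := by
    rw [← Finset.mul_sum]
    congr 1
    have := χ.2
    exact_mod_cast congrArg (Nat.cast : ℕ → ℝ) this
  linarith

lemma move_wsum (g : Fin (ℓ+2) → ℝ) {χ : Fin (ℓ+2) → ℕ} {x z : Fin (ℓ+2)}
    (hx : 1 ≤ χ x) (hxz : x ≠ z) :
    ∑ u, g u * (move χ x z u : ℝ) = (∑ u, g u * (χ u : ℝ)) + g z - g x := by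
  have hmv : move χ x z = Function.update (Function.update χ z (χ z + 1)) x (χ x - 1) := by
    funext u
    rcases eq_or_ne u x with rfl|hux
    · simp [move, Function.update, hxz]
    · rcases eq_or_ne u z with rfl|huz
      · simp [move, Function.update, hux, Ne.symm hux]
      · simp [move, Function.update, hux, huz]
  have hz' : z ∈ Finset.univ \ {x} := by simp [Finset.mem_sdiff, Ne.symm hxz]
  have key : ∀ ψ : Fin (ℓ+2) → ℕ, ∑ u, g u * (ψ u : ℝ)
      = g x * (ψ x : ℝ) + (g z * (ψ z : ℝ) + ∑ u ∈ (Finset.univ \ {x}) \ {z}, g u * (ψ u : ℝ)) := by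
    intro ψ
    rw [Finset.sum_eq_add_sum_sdiff_singleton_of_mem (Finset.mem_univ x) (fun u => g u * (ψ u : ℝ)),
      Finset.sum_eq_add_sum_sdiff_singleton_of_mem hz' (fun u => g u * (ψ u : ℝ))]
  rw [hmv, key, key χ]
  have e1 : Function.update (Function.update χ z (χ z + 1)) x (χ x - 1) x = χ x - 1 := by
    simp [Function.update]
  have e2 : Function.update (Function.update χ z (χ z + 1)) x (χ x - 1) z = χ z + 1 := by
    simp [Function.update, Ne.symm hxz, hxz]
  have e3 : ∀ u ∈ (Finset.univ \ {x}) \ {z},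
      Function.update (Function.update χ z (χ z + 1)) x (χ x - 1) u = χ u := by
    intro u hu
    simp only [Finset.mem_sdiff, Finset.mem_singleton, Finset.mem_univ] at hu
    simp [Function.update, hu.1.2, hu.2]
  rw [e1, e2, Finset.sum_congr rfl (fun u hu => by rw [e3 u hu])]
  have hc : ((χ x - 1 : ℕ) : ℝ) = (χ x : ℝ) - 1 := by
    have : (1:ℕ) ≤ χ x := hx
    push_cast [this]
    ring
  rw [hc]
  push_cast
  ring

lemma pot_jump {χ : SZRSector ℓ n} {x z : Fin (ℓ+2)} (hx : 1 ≤ χ.1 x) (hxz : x ≠ z) :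
    pot (jumpTo χ x z) = pot χ + wt ℓ z.val - wt ℓ x.val := by
  have hj : jumpTo χ x z = ⟨move χ.1 x z, (move_sum hx hxz).trans χ.2⟩ := by
    rw [jumpTo]; exact dif_pos ⟨hx, hxz⟩
  rw [hj]
  show ∑ u : Fin (ℓ+2), wt ℓ u.val * ((move χ.1 x z u : ℕ) : ℝ) = _
  rw [move_wsum (fun u => wt ℓ u.val) hx hxz]
  rfl

/-- Next site to the right (with the absorbing boundary). -/
def nextS (ℓ y : ℕ) : ℕ := if y = ℓ then ℓ + 1 else y + 1

/-- Next site to the left (with the absorbing boundary). -/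
def prevS (y : ℕ) : ℕ := if y = 1 then 0 else y - 1

lemma gen_apply_grouped (hl : 2 ≤ ℓ) (f : SZRSector ℓ n → ℝ) (χ : SZRSector ℓ n) :
    genSZRE ℓ n f χ = ∑ y ∈ Finset.Icc 1 ℓ,
      (if 2 ≤ χ.1 ((y : ℕ) : Fin (ℓ+2)) then (1:ℝ) else 0) *
        ((f (jumpTo χ ((y : ℕ) : Fin (ℓ+2)) ((nextS ℓ y : ℕ) : Fin (ℓ+2))) - f χ)
          + (f (jumpTo χ ((y : ℕ) : Fin (ℓ+2)) ((prevS y : ℕ) : Fin (ℓ+2))) - f χ)) := by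
  classical
  set T : ℕ → ℕ → ℝ := fun y z =>
    (if 2 ≤ χ.1 ((y : ℕ) : Fin (ℓ+2)) then (1:ℝ) else 0) *
      (f (jumpTo χ ((y : ℕ) : Fin (ℓ+2)) ((z : ℕ) : Fin (ℓ+2))) - f χ) with hT
  rw [gen_apply]
  have inner : ∀ y ∈ Finset.Icc 1 ℓ,
      (∑ z ∈ Finset.Icc 1 ℓ, (if z = y + 1 ∨ y = z + 1 then T y z else 0))
      = (if y + 1 ≤ ℓ then T y (y+1) else 0) + (if 2 ≤ y then T y (y-1) else 0) := by
    intro y hy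
    simp only [Finset.mem_Icc] at hy
    have split : ∀ z ∈ Finset.Icc 1 ℓ,
        (if z = y + 1 ∨ y = z + 1 then T y z else 0)
        = (if z = y + 1 then T y z else 0) + (if 2 ≤ y then (if z = y - 1 then T y z else 0) else 0) := by
      intro z hz
      simp only [Finset.mem_Icc] at hz
      by_cases h1 : z = y + 1
      · rw [if_pos (Or.inl h1), if_pos h1]
        have : ¬ (2 ≤ y ∧ z = y - 1) := by omega
        by_cases h2 : 2 ≤ y
        · rw [if_pos h2, if_neg (by omega : ¬ z = y - 1)]; ring
        · rw [if_neg h2]; ring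
      · by_cases h2 : y = z + 1
        · have hy2 : 2 ≤ y := by omega
          have hz2 : z = y - 1 := by omega
          rw [if_pos (Or.inr h2), if_neg h1, if_pos hy2, if_pos hz2]; ring
        · rw [if_neg (by tauto), if_neg h1]
          by_cases h3 : 2 ≤ y
          · rw [if_pos h3, if_neg (by omega : ¬ z = y - 1)]; ring
          · rw [if_neg h3]; ring
    rw [Finset.sum_congr rfl split, Finset.sum_add_distrib]
    congr 1
    · rw [Finset.sum_ite_eq' (Finset.Icc 1 ℓ) (y+1) (fun z => T y z)]
      by_cases h : y + 1 ≤ ℓ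
      · rw [if_pos (by simp [Finset.mem_Icc]; omega), if_pos h]
      · rw [if_neg (by simp [Finset.mem_Icc]; omega), if_neg h]
    · by_cases h2 : 2 ≤ y
      · simp only [if_pos h2]
        rw [Finset.sum_ite_eq' (Finset.Icc 1 ℓ) (y-1) (fun z => T y z)]
        rw [if_pos (by simp [Finset.mem_Icc]; omega)]
      · simp only [if_neg h2, Finset.sum_const_zero]
  rw [Finset.sum_congr rfl inner, Finset.sum_add_distrib]
  have hBR : T ℓ (ℓ+1) = ∑ y ∈ Finset.Icc 1 ℓ, (if y = ℓ then T ℓ (ℓ+1) else 0) := by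
    rw [Finset.sum_ite_eq' (Finset.Icc 1 ℓ) ℓ (fun _ => T ℓ (ℓ+1))]
    rw [if_pos (by simp [Finset.mem_Icc]; omega)]
  have hBL : T 1 0 = ∑ y ∈ Finset.Icc 1 ℓ, (if y = 1 then T 1 0 else 0) := by
    rw [Finset.sum_ite_eq' (Finset.Icc 1 ℓ) 1 (fun _ => T 1 0)]
    rw [if_pos (by simp [Finset.mem_Icc]; omega)]
  have lhs_eq : T ℓ (ℓ+1) + T 1 0 +
      ((∑ y ∈ Finset.Icc 1 ℓ, (if y + 1 ≤ ℓ then T y (y+1) else 0))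
        + (∑ y ∈ Finset.Icc 1 ℓ, (if 2 ≤ y then T y (y-1) else 0)))
      = ∑ y ∈ Finset.Icc 1 ℓ, (T y (nextS ℓ y) + T y (prevS y)) := by
    rw [hBR, hBL, ← Finset.sum_add_distrib, ← Finset.sum_add_distrib, ← Finset.sum_add_distrib]
    refine Finset.sum_congr rfl fun y hy => ?_
    simp only [Finset.mem_Icc] at hy
    unfold nextS prevS
    split_ifs <;> first | (exfalso; omega) | (subst_vars; ring) | ring
  calc T ℓ (ℓ+1) + T 1 0 +
      ((∑ y ∈ Finset.Icc 1 ℓ, (if y + 1 ≤ ℓ then T y (y+1) else 0))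
        + (∑ y ∈ Finset.Icc 1 ℓ, (if 2 ≤ y then T y (y-1) else 0)))
      = ∑ y ∈ Finset.Icc 1 ℓ, (T y (nextS ℓ y) + T y (prevS y)) := lhs_eq
    _ = _ := by
      refine Finset.sum_congr rfl fun y _ => ?_
      rw [hT]
      ring



lemma wt_pair (hl : 2 ≤ ℓ) {y : ℕ} (hy1 : 1 ≤ y) (hy2 : y ≤ ℓ) :
    wt ℓ (nextS ℓ y) + wt ℓ (prevS y) = 2 * wt ℓ y - 2
    ∧ |wt ℓ (nextS ℓ y) - wt ℓ y| ≤ ℓ ∧ |wt ℓ (prevS y) - wt ℓ y| ≤ ℓ := by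
  have hyr1 : (1:ℝ) ≤ (y:ℝ) := by exact_mod_cast hy1
  have hyr2 : (y:ℝ) ≤ (ℓ:ℝ) := by exact_mod_cast hy2
  have hlr : (2:ℝ) ≤ (ℓ:ℝ) := by exact_mod_cast hl
  by_cases h1 : y = ℓ
  · subst h1
    have h2 : ¬ y = 1 := by omega
    have hc : ((y - 1 : ℕ) : ℝ) = (y:ℝ) - 1 := by
      have : (1:ℕ) ≤ y := hy1
      push_cast [this]; ring
    unfold nextS prevS wt
    rw [if_pos rfl, if_neg h2, hc]
    push_cast
    refine ⟨by ring, ?_, ?_⟩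
    · rw [abs_le]; constructor <;> nlinarith
    · rw [abs_le]; constructor <;> nlinarith
  · by_cases h2 : y = 1
    · subst h2
      unfold nextS prevS wt
      rw [if_neg h1, if_pos rfl]
      push_cast
      refine ⟨by ring, ?_, ?_⟩
      · rw [abs_le]; constructor <;> nlinarith
      · rw [abs_le]; constructor <;> nlinarith
    · have hc : ((y - 1 : ℕ) : ℝ) = (y:ℝ) - 1 := by
        have : (1:ℕ) ≤ y := hy1
        push_cast [this]; ring
      have hyl : (y:ℝ) ≤ (ℓ:ℝ) - 1 := by
        have : y + 1 ≤ ℓ := by omega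
        have := (Nat.cast_le (α := ℝ)).mpr this
        push_cast at this; linarith
      unfold nextS prevS wt
      rw [if_neg h1, if_neg h2, hc]
      push_cast
      refine ⟨by ring, ?_, ?_⟩
      · rw [abs_le]; constructor <;> nlinarith
      · rw [abs_le]; constructor <;> nlinarith

lemma exp_quad {x : ℝ} (hx : |x| ≤ 1) : Real.exp x ≤ 1 + x + (3/4) * x ^ 2 := by
  have h := Real.exp_bound hx (by norm_num : 0 < 2)
  have hs : ∑ m ∈ Finset.range 2, x ^ m / (Nat.factorial m) = 1 + x := by
    simp [Finset.sum_range_succ]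
  rw [hs] at h
  have h' := (abs_sub_le_iff.mp h).1
  rw [sq_abs] at h'
  norm_num [Nat.factorial] at h'
  linarith

lemma exp_pair (hl : 2 ≤ ℓ) {a b : ℝ} (hab : a + b = -2) (ha : |a| ≤ (ℓ:ℝ)) (hb : |b| ≤ (ℓ:ℝ)) :
    Real.exp (((ℓ:ℝ)^3)⁻¹ * a) + Real.exp (((ℓ:ℝ)^3)⁻¹ * b) ≤ 2 - ((ℓ:ℝ)^3)⁻¹ := by
  set θ : ℝ := ((ℓ:ℝ)^3)⁻¹ with hθdef
  have hlr : (2:ℝ) ≤ (ℓ:ℝ) := by exact_mod_cast hl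
  have hl0 : (0:ℝ) < (ℓ:ℝ) := by linarith
  have hθpos : 0 < θ := by positivity
  have hθl : θ * (ℓ:ℝ) ^ 2 = ((ℓ:ℝ))⁻¹ := by
    rw [hθdef]; field_simp
  have hθl2 : θ * (ℓ:ℝ) ^ 2 ≤ 1/2 := by
    rw [hθl]
    rw [inv_le_comm₀ (by linarith) (by norm_num)]
    norm_num; linarith
  have hθℓ1 : θ * (ℓ:ℝ) ≤ 1 := by
    have hll : (ℓ:ℝ) ≤ (ℓ:ℝ)^2 := by nlinarith
    have h1 : θ * (ℓ:ℝ) ≤ θ * (ℓ:ℝ)^2 := mul_le_mul_of_nonneg_left hll hθpos.le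
    calc θ * (ℓ:ℝ) ≤ θ * (ℓ:ℝ)^2 := h1
      _ ≤ 1/2 := hθl2
      _ ≤ 1 := by norm_num
  have haθ : |θ * a| ≤ 1 := by
    rw [abs_mul, abs_of_pos hθpos]
    calc θ * |a| ≤ θ * (ℓ:ℝ) := by nlinarith
      _ ≤ 1 := hθℓ1
  have hbθ : |θ * b| ≤ 1 := by
    rw [abs_mul, abs_of_pos hθpos]
    calc θ * |b| ≤ θ * (ℓ:ℝ) := by nlinarith
      _ ≤ 1 := hθℓ1
  have e1 := exp_quad haθ
  have e2 := exp_quad hbθ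
  have ha2 : a ^ 2 ≤ (ℓ:ℝ) ^ 2 := by
    have := abs_le.mp ha
    nlinarith
  have hb2 : b ^ 2 ≤ (ℓ:ℝ) ^ 2 := by
    have := abs_le.mp hb
    nlinarith
  have h1 : (θ * a) ^ 2 ≤ θ^2 * (ℓ:ℝ)^2 := by nlinarith [ha2, sq_nonneg θ]
  have h2 : (θ * b) ^ 2 ≤ θ^2 * (ℓ:ℝ)^2 := by nlinarith [hb2, sq_nonneg θ]
  have h3 : θ^2 * (ℓ:ℝ)^2 ≤ θ/2 := by nlinarith [hθpos, hθl2]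
  have h4 : θ * a + θ * b = -2 * θ := by rw [← mul_add, hab]; ring
  linarith [e1, e2, h1, h2, h3, h4]



/-- The Lyapunov function: exponential of the potential on unfrozen configurations, `0` on
frozen ones. -/
noncomputable def lyap (θ : ℝ) (χ : SZRSector ℓ n) : ℝ :=
  if ∃ y : ℕ, 1 ≤ y ∧ y ≤ ℓ ∧ 2 ≤ χ.1 ((y : ℕ) : Fin (ℓ+2)) then Real.exp (θ * pot χ) else 0

lemma lyap_nonneg (θ : ℝ) (χ : SZRSector ℓ n) : 0 ≤ lyap θ χ := by
  unfold lyap; split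
  · exact (Real.exp_pos _).le
  · exact le_rfl

lemma lyap_le_exp (θ : ℝ) (χ : SZRSector ℓ n) : lyap θ χ ≤ Real.exp (θ * pot χ) := by
  unfold lyap; split
  · exact le_rfl
  · exact (Real.exp_pos _).le

lemma val_cast_small {u : ℕ} (hu : u < ℓ + 2) : (((u : ℕ) : Fin (ℓ+2)) : ℕ) = u :=
  Fin.val_cast_of_lt hu

lemma gen_lyap (hl : 2 ≤ ℓ) (χ : SZRSector ℓ n) :
    genSZRE ℓ n (lyap (((ℓ:ℝ)^3)⁻¹)) χ ≤ -((ℓ:ℝ)^3)⁻¹ * lyap (((ℓ:ℝ)^3)⁻¹) χ := by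
  classical
  set θ : ℝ := ((ℓ:ℝ)^3)⁻¹ with hθdef
  have hθpos : 0 < θ := by
    have : (0:ℝ) < (ℓ:ℝ) := by exact_mod_cast Nat.lt_of_lt_of_le Nat.zero_lt_two hl
    positivity
  rw [gen_apply_grouped hl]
  by_cases hfz : ∃ y : ℕ, 1 ≤ y ∧ y ≤ ℓ ∧ 2 ≤ χ.1 ((y : ℕ) : Fin (ℓ+2))
  · obtain ⟨y₀, hy₀1, hy₀2, hy₀act⟩ := hfz
    have hχ : lyap θ χ = Real.exp (θ * pot χ) := if_pos ⟨y₀, hy₀1, hy₀2, hy₀act⟩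
    -- the main per-site estimate, for an active site
    have main : ∀ y, 1 ≤ y → y ≤ ℓ → 2 ≤ χ.1 ((y : ℕ) : Fin (ℓ+2)) →
        (lyap θ (jumpTo χ ((y : ℕ) : Fin (ℓ+2)) ((nextS ℓ y : ℕ) : Fin (ℓ+2))) - lyap θ χ)
          + (lyap θ (jumpTo χ ((y : ℕ) : Fin (ℓ+2)) ((prevS y : ℕ) : Fin (ℓ+2))) - lyap θ χ)
        ≤ -θ * Real.exp (θ * pot χ) := by
      intro y hy1 hy2 hact
      have hx1 : 1 ≤ χ.1 ((y : ℕ) : Fin (ℓ+2)) := le_trans one_le_two hact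
      have hvy : (((y : ℕ) : Fin (ℓ+2)) : ℕ) = y := val_cast_small (by omega)
      have hvn : (((nextS ℓ y : ℕ) : Fin (ℓ+2)) : ℕ) = nextS ℓ y :=
        val_cast_small (by unfold nextS; split <;> omega)
      have hvp : (((prevS y : ℕ) : Fin (ℓ+2)) : ℕ) = prevS y :=
        val_cast_small (by unfold prevS; split <;> omega)
      have hne_n : ((y : ℕ) : Fin (ℓ+2)) ≠ ((nextS ℓ y : ℕ) : Fin (ℓ+2)) := by
        intro hc
        have := congrArg Fin.val hc
        rw [hvy, hvn] at this
        unfold nextS at this; split at this <;> omega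
      have hne_p : ((y : ℕ) : Fin (ℓ+2)) ≠ ((prevS y : ℕ) : Fin (ℓ+2)) := by
        intro hc
        have := congrArg Fin.val hc
        rw [hvy, hvp] at this
        unfold prevS at this; split at this <;> omega
      have hpn : pot (jumpTo χ ((y : ℕ) : Fin (ℓ+2)) ((nextS ℓ y : ℕ) : Fin (ℓ+2)))
          = pot χ + (wt ℓ (nextS ℓ y) - wt ℓ y) := by
        rw [pot_jump hx1 hne_n, hvn, hvy]; ring
      have hpp : pot (jumpTo χ ((y : ℕ) : Fin (ℓ+2)) ((prevS y : ℕ) : Fin (ℓ+2)))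
          = pot χ + (wt ℓ (prevS y) - wt ℓ y) := by
        rw [pot_jump hx1 hne_p, hvp, hvy]; ring
      obtain ⟨hsum, habs_n, habs_p⟩ := wt_pair hl hy1 hy2
      have hab : (wt ℓ (nextS ℓ y) - wt ℓ y) + (wt ℓ (prevS y) - wt ℓ y) = -2 := by linarith
      have hexp := exp_pair hl hab habs_n habs_p
      have hb1 : lyap θ (jumpTo χ ((y : ℕ) : Fin (ℓ+2)) ((nextS ℓ y : ℕ) : Fin (ℓ+2)))
          ≤ Real.exp (θ * pot χ) * Real.exp (θ * (wt ℓ (nextS ℓ y) - wt ℓ y)) := by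
        refine le_trans (lyap_le_exp θ _) ?_
        rw [hpn, mul_add, Real.exp_add]
      have hb2 : lyap θ (jumpTo χ ((y : ℕ) : Fin (ℓ+2)) ((prevS y : ℕ) : Fin (ℓ+2)))
          ≤ Real.exp (θ * pot χ) * Real.exp (θ * (wt ℓ (prevS y) - wt ℓ y)) := by
        refine le_trans (lyap_le_exp θ _) ?_
        rw [hpp, mul_add, Real.exp_add]
      have hE : 0 < Real.exp (θ * pot χ) := Real.exp_pos _
      rw [hχ]
      nlinarith [hb1, hb2, hexp, hE]
    have site : ∀ y ∈ Finset.Icc 1 ℓ,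
        (if 2 ≤ χ.1 ((y : ℕ) : Fin (ℓ+2)) then (1:ℝ) else 0) *
          ((lyap θ (jumpTo χ ((y : ℕ) : Fin (ℓ+2)) ((nextS ℓ y : ℕ) : Fin (ℓ+2))) - lyap θ χ)
            + (lyap θ (jumpTo χ ((y : ℕ) : Fin (ℓ+2)) ((prevS y : ℕ) : Fin (ℓ+2))) - lyap θ χ))
        ≤ (if y = y₀ then -θ * Real.exp (θ * pot χ) else 0) := by
      intro y hy
      simp only [Finset.mem_Icc] at hy
      by_cases hyy : y = y₀
      · subst hyy
        rw [if_pos hy₀act, if_pos rfl, one_mul]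
        exact main y hy.1 hy.2 hy₀act
      · rw [if_neg hyy]
        by_cases hact : 2 ≤ χ.1 ((y : ℕ) : Fin (ℓ+2))
        · rw [if_pos hact, one_mul]
          have := main y hy.1 hy.2 hact
          nlinarith [Real.exp_pos (θ * pot χ)]
        · rw [if_neg hact, zero_mul]
    calc (∑ y ∈ Finset.Icc 1 ℓ, _) ≤ ∑ y ∈ Finset.Icc 1 ℓ,
          (if y = y₀ then -θ * Real.exp (θ * pot χ) else 0) := Finset.sum_le_sum site
      _ = -θ * Real.exp (θ * pot χ) := by
          rw [Finset.sum_ite_eq' (Finset.Icc 1 ℓ) y₀ (fun _ => -θ * Real.exp (θ * pot χ))]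
          rw [if_pos (by simp [Finset.mem_Icc]; omega)]
      _ = -θ * lyap θ χ := by rw [hχ]
  · -- frozen configuration: everything vanishes
    have hlz : lyap θ χ = 0 := if_neg hfz
    push_neg at hfz
    have hz : ∀ y ∈ Finset.Icc 1 ℓ,
        (if 2 ≤ χ.1 ((y : ℕ) : Fin (ℓ+2)) then (1:ℝ) else 0) *
          ((lyap θ (jumpTo χ ((y : ℕ) : Fin (ℓ+2)) ((nextS ℓ y : ℕ) : Fin (ℓ+2))) - lyap θ χ)
            + (lyap θ (jumpTo χ ((y : ℕ) : Fin (ℓ+2)) ((prevS y : ℕ) : Fin (ℓ+2))) - lyap θ χ))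
        = 0 := by
      intro y hy
      simp only [Finset.mem_Icc] at hy
      have := hfz y hy.1 hy.2
      rw [if_neg (by omega), zero_mul]
    rw [Finset.sum_congr rfl hz, Finset.sum_const_zero, hlz]
    simp

lemma gen_pos (f : SZRSector ℓ n → ℝ) (hf : ∀ χ, 0 ≤ f χ) (χ : SZRSector ℓ n) :
    0 ≤ genSZRE ℓ n f χ + ((ℓ:ℝ)^2 + 2) * f χ := by
  rw [gen_apply]
  have hb : ∀ x z : Fin (ℓ+2),
      -f χ ≤ (if 2 ≤ χ.1 x then (1:ℝ) else 0) * (f (jumpTo χ x z) - f χ) := by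
    intro x z
    by_cases h : 2 ≤ χ.1 x
    · rw [if_pos h, one_mul]
      have := hf (jumpTo χ x z)
      linarith
    · rw [if_neg h, zero_mul]
      have := hf χ
      linarith
  have hdd : -((ℓ:ℝ)^2 * f χ) ≤ ∑ y ∈ Finset.Icc 1 ℓ, ∑ z ∈ Finset.Icc 1 ℓ,
      (if z = y + 1 ∨ y = z + 1 then
        (if 2 ≤ χ.1 ((y : ℕ) : Fin (ℓ+2)) then (1:ℝ) else 0) *
          (f (jumpTo χ ((y : ℕ) : Fin (ℓ+2)) ((z : ℕ) : Fin (ℓ+2))) - f χ)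
      else 0) := by
    have step : ∀ y ∈ Finset.Icc 1 ℓ, ∀ z ∈ Finset.Icc 1 ℓ,
        -f χ ≤ (if z = y + 1 ∨ y = z + 1 then
          (if 2 ≤ χ.1 ((y : ℕ) : Fin (ℓ+2)) then (1:ℝ) else 0) *
            (f (jumpTo χ ((y : ℕ) : Fin (ℓ+2)) ((z : ℕ) : Fin (ℓ+2))) - f χ)
        else 0) := by
      intro y _ z _
      by_cases hadj : z = y + 1 ∨ y = z + 1
      · rw [if_pos hadj]; exact hb _ _
      · rw [if_neg hadj]; have := hf χ; linarith
    have h1 : ∑ y ∈ Finset.Icc 1 ℓ, ∑ z ∈ Finset.Icc 1 ℓ, (-f χ) ≤ _ :=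
      Finset.sum_le_sum (fun y hy => Finset.sum_le_sum (step y hy))
    have h2 : ∑ y ∈ Finset.Icc 1 ℓ, ∑ z ∈ Finset.Icc 1 ℓ, (-f χ) = -((ℓ:ℝ)^2 * f χ) := by
      simp [Finset.sum_const, Nat.card_Icc]
      ring
    rw [← h2]
    exact h1
  have h3 := hb ((ℓ : ℕ) : Fin (ℓ+2)) ((ℓ + 1 : ℕ) : Fin (ℓ+2))
  have h4 := hb ((1 : ℕ) : Fin (ℓ+2)) ((0 : ℕ) : Fin (ℓ+2))
  have := hf χ
  nlinarith [h3, h4, hdd]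


end Concrete

/-- **Freezing time of the stuck zero-range process.**  For every `δ ∈ (0,1)` and `ε < 1`
there exists `ℓ̄` such that for all `ℓ ≥ ℓ̄` and every initial configuration `χ₀ ∈ A_ℓ(δ)`,
the probability that the stuck zero-range process at time `ℓ⁴` is not yet frozen (some site of
`Λ_ℓ` carries at least two particles) is at most `exp(−ℓ^ε)`. -/
theorem szr_freezing_time :
    ∀ δ ε : ℝ, δ ∈ Set.Ioo (0 : ℝ) 1 → ε < 1 →
    ∃ ℓbar : ℕ, ∀ ℓ : ℕ, ℓbar ≤ ℓ →
      ∀ χ₀ : Fin (ℓ + 2) → ℕ,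
        memA ℓ δ (fun y => if h : y < ℓ + 2 then χ₀ ⟨y, h⟩ else 0) →
        szrProb ℓ (∑ y : Fin (ℓ + 2), χ₀ y) ⟨χ₀, rfl⟩ ((ℓ : ℝ) ^ (4 : ℕ))
            {χ | ∃ y : ℕ, 1 ≤ y ∧ y ≤ ℓ ∧ 2 ≤ χ.1 ((y : ℕ) : Fin (ℓ + 2))}
          ≤ Real.exp (-(ℓ : ℝ) ^ ε) := by
  intro δ ε hδ hε
  -- choose the threshold
  have htend : Filter.Tendsto (fun x : ℝ => x ^ (ε - 1)) Filter.atTop (nhds 0) := by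
    have h0 : (0:ℝ) < 1 - ε := by linarith
    have := tendsto_rpow_neg_atTop h0
    convert this using 2 with x
    ring_nf
  obtain ⟨N₀, hN₀⟩ := Filter.eventually_atTop.mp
    (htend.eventually (eventually_le_nhds (by norm_num : (0:ℝ) < 1/2)))
  refine ⟨max (Nat.ceil N₀) 18, fun ℓ hℓ χ₀ hA => ?_⟩
  have hl18 : 18 ≤ ℓ := le_trans (le_max_right _ _) hℓ
  have hl2 : 2 ≤ ℓ := by omega
  have hlr : (18:ℝ) ≤ (ℓ:ℝ) := by exact_mod_cast hl18
  have hl0 : (0:ℝ) < (ℓ:ℝ) := by linarith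
  have hNℓ : N₀ ≤ (ℓ:ℝ) := by
    have h1 : (Nat.ceil N₀ : ℕ) ≤ ℓ := le_trans (le_max_left _ _) hℓ
    calc N₀ ≤ (Nat.ceil N₀ : ℝ) := Nat.le_ceil N₀
      _ ≤ (ℓ:ℝ) := by exact_mod_cast h1
  set n : ℕ := ∑ y : Fin (ℓ+2), χ₀ y with hn_def
  set θ : ℝ := ((ℓ:ℝ)^3)⁻¹ with hθdef
  have hθpos : 0 < θ := by positivity
  obtain ⟨hv0, hvl1, hvsum, _⟩ := hA
  -- the particle number
  have hn : n = ⌊(1 + δ) * ℓ⌋₊ := by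
    set v : ℕ → ℕ := fun y => if h : y < ℓ + 2 then χ₀ ⟨y, h⟩ else 0 with hv_def
    have h1 : n = ∑ i ∈ Finset.range (ℓ+2), v i := by
      rw [hn_def, ← Fin.sum_univ_eq_sum_range v (ℓ+2)]
      refine Finset.sum_congr rfl fun i _ => ?_
      rw [hv_def]
      simp only [i.isLt, dif_pos, Fin.eta]
    have h2 : ∑ i ∈ Finset.range (ℓ+2), v i
        = (∑ i ∈ Finset.range (ℓ+1), v i) + v (ℓ+1) := Finset.sum_range_succ v (ℓ+1)
    have h3 : ∑ i ∈ Finset.range (ℓ+1), v i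
        = (∑ i ∈ Finset.range ℓ, v (i+1)) + v 0 := Finset.sum_range_succ' v ℓ
    have h4 : ∑ i ∈ Finset.range ℓ, v (i+1) = ∑ i ∈ Finset.Icc 1 ℓ, v i := by
      rw [← Finset.Ico_add_one_right_eq_Icc, Finset.sum_Ico_eq_sum_range]
      exact Finset.sum_congr (by simp) fun i _ => by rw [add_comm]
    rw [h1, h2, h3, h4, hvsum, hv0, hvl1]
    omega
  have hnle : n ≤ 2 * ℓ := by
    rw [hn]
    have h1 : (1 + δ) * (ℓ:ℝ) ≤ ((2 * ℓ : ℕ) : ℝ) := by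
      push_cast
      nlinarith [hδ.2, hl0]
    calc ⌊(1 + δ) * (ℓ:ℝ)⌋₊ ≤ ⌊((2 * ℓ : ℕ) : ℝ)⌋₊ := Nat.floor_mono h1
      _ = 2 * ℓ := Nat.floor_natCast _
  -- the initial configuration as a sector element
  set χs : SZRSector ℓ n := ⟨χ₀, rfl⟩ with hχs
  have hpot : θ * pot χs ≤ 8 := by
    have h1 : pot χs ≤ ((ℓ:ℝ) + 1)^2 * n := pot_le χs
    have h2 : (n:ℝ) ≤ 2 * (ℓ:ℝ) := by exact_mod_cast hnle
    have h3 : pot χs ≤ ((ℓ:ℝ) + 1)^2 * (2 * (ℓ:ℝ)) := by nlinarith [pot_nonneg χs]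
    have h4 : ((ℓ:ℝ) + 1)^2 * (2 * (ℓ:ℝ)) ≤ 8 * (ℓ:ℝ)^3 := by nlinarith
    rw [hθdef]
    rw [inv_mul_le_iff₀ (by positivity)]
    nlinarith
  -- apply the abstract comparison
  set S : Set (SZRSector ℓ n) :=
    {χ | ∃ y : ℕ, 1 ≤ y ∧ y ≤ ℓ ∧ 2 ≤ χ.1 ((y : ℕ) : Fin (ℓ + 2))} with hS
  set f : SZRSector ℓ n → ℝ := fun χ => if χ ∈ S then (1:ℝ) else 0 with hf
  have hcomp := exp_comparison (genSZRE ℓ n) ((ℓ:ℝ)^2 + 2) θ ((ℓ:ℝ)^(4:ℕ))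
    hθpos.le
    (by
      have h1 : (1:ℝ) ≤ (ℓ:ℝ) := by linarith
      have h13 : (1:ℝ) ≤ (ℓ:ℝ)^3 := one_le_pow₀ h1
      have : θ ≤ 1 := by
        rw [hθdef]
        exact inv_le_one_of_one_le₀ h13
      nlinarith)
    (by positivity)
    (fun g hg χ => gen_pos g hg χ)
    (lyap θ) f (lyap_nonneg θ) (fun χ => by by_cases h : χ ∈ S <;> simp [hf, h])
    (fun χ => by
      rw [hf]
      dsimp only
      split
      · rename_i hmem
        have hmem' : ∃ y : ℕ, 1 ≤ y ∧ y ≤ ℓ ∧ 2 ≤ χ.1 ((y : ℕ) : Fin (ℓ + 2)) := hmem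
        rw [lyap, if_pos hmem']
        have := mul_nonneg hθpos.le (pot_nonneg χ)
        calc (1:ℝ) = Real.exp 0 := (Real.exp_zero).symm
          _ ≤ Real.exp (θ * pot χ) := Real.exp_le_exp.mpr this
      · exact lyap_nonneg θ χ)
    (fun χ => gen_lyap hl2 χ) χs
  have hprob : szrProb ℓ n χs ((ℓ:ℝ)^(4:ℕ)) S
      ≤ Real.exp (-θ * (ℓ:ℝ)^(4:ℕ)) * lyap θ χs := hcomp
  -- final numeric estimate
  have hθt : θ * (ℓ:ℝ)^(4:ℕ) = (ℓ:ℝ) := by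
    have h34 : (ℓ:ℝ)^(4:ℕ) = (ℓ:ℝ)^3 * (ℓ:ℝ) := by ring
    rw [hθdef, h34, inv_mul_cancel_left₀ (by positivity : ((ℓ:ℝ)^3) ≠ 0)]
  have hlyb : lyap θ χs ≤ Real.exp 8 := by
    calc lyap θ χs ≤ Real.exp (θ * pot χs) := lyap_le_exp θ χs
      _ ≤ Real.exp 8 := Real.exp_le_exp.mpr hpot
  have hrpow : (ℓ:ℝ) ^ ε ≤ (ℓ:ℝ) - 8 := by
    have h1 : (ℓ:ℝ) ^ (ε - 1) ≤ 1/2 := hN₀ (ℓ:ℝ) hNℓ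
    have h2 : (ℓ:ℝ) ^ ε = (ℓ:ℝ) ^ (ε - 1) * (ℓ:ℝ) := by
      have h5 := Real.rpow_sub hl0 ε 1
      rw [Real.rpow_one] at h5
      rw [h5]
      field_simp
    rw [h2]
    have h3 : (ℓ:ℝ) ^ (ε - 1) * (ℓ:ℝ) ≤ (1/2) * (ℓ:ℝ) := by
      apply mul_le_mul_of_nonneg_right h1 hl0.le
    calc (ℓ:ℝ) ^ (ε - 1) * (ℓ:ℝ) ≤ (1/2) * (ℓ:ℝ) := h3
      _ ≤ (ℓ:ℝ) - 8 := by linarith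
  calc szrProb ℓ n χs ((ℓ:ℝ)^(4:ℕ)) S
      ≤ Real.exp (-θ * (ℓ:ℝ)^(4:ℕ)) * lyap θ χs := hprob
    _ ≤ Real.exp (-θ * (ℓ:ℝ)^(4:ℕ)) * Real.exp 8 :=
        mul_le_mul_of_nonneg_left hlyb (Real.exp_nonneg _)
    _ = Real.exp (8 - (ℓ:ℝ)) := by
        rw [← Real.exp_add]
        rw [neg_mul, hθt]
        ring_nf
    _ ≤ Real.exp (-(ℓ:ℝ) ^ ε) := by
        apply Real.exp_le_exp.mpr
        linarith

end FEP
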